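/- If p satisfies the TOV inequality p'(r) ≤ -ρ(r)m(r)/(r²(1 - 2m(r)/r)) on (0,R], with 2m(r)/r < 1 and the average density ρ̄(r) = 3m(r)/(4πr³) nonincreasing, then the function r ↦ p(r) - (3/(16π))·(m(r)/r³)·ln(1 - 2m(r)/r) is nonincreasing on (0,R]. -/

import Mathlib

open Real Set MeasureTheory

lemma key_ineq (x A D L : ℝ) (hx : 0 < x) (hA : 0 ≤ A) (hx2A : 0 < x - 2*A)
    (hD3 : D*x - 3*A ≤ 0) (hL : L ≤ 0) :
    -(3/(16*π) * ((D*x - 3*A)/x^4*L - 2*A*(D*x - A)/(x^4*(x-2*A)))) ≤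
      D * (A/(4*π*x^3*(x-2*A))) := by
  have hπ : 0 < π := Real.pi_pos
  have hprod : 0 ≤ (D*x-3*A)*L := mul_nonneg_of_nonpos_of_nonpos hD3 hL
  have h1 : 0 ≤ 3/(16*π) * ((D*x-3*A)/x^4*L) := by
    have : (D*x-3*A)/x^4*L = (D*x-3*A)*L/x^4 := by ring
    rw [this]
    exact mul_nonneg (by positivity) (div_nonneg hprod (by positivity))
  have h2 : 3/(16*π) * (2*A*(D*x-A)/(x^4*(x-2*A))) ≤ D * (A/(4*π*x^3*(x-2*A))) := by
    rw [← sub_nonneg]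
    have e : D * (A/(4*π*x^3*(x-2*A))) - 3/(16*π) * (2*A*(D*x-A)/(x^4*(x-2*A)))
        = A*(3*A - D*x)/(8*π*x^4*(x-2*A)) := by
      field_simp
      ring
    rw [e]
    exact div_nonneg (mul_nonneg hA (by linarith)) (by positivity)
  have e2 : -(3/(16*π) * ((D*x-3*A)/x^4*L - 2*A*(D*x-A)/(x^4*(x-2*A))))
      = -(3/(16*π) * ((D*x-3*A)/x^4*L)) + 3/(16*π) * (2*A*(D*x-A)/(x^4*(x-2*A))) := by
    ring
  rw [e2]
  linarith

lemma aux_hasDerivAt_Q (m : ℝ → ℝ) (x D : ℝ) (hx : x ≠ 0) (hu : x - 2 * m x ≠ 0)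
    (hD : HasDerivAt m D x) :
    HasDerivAt (fun r => 3 / (16 * π) * (m r / r ^ 3) * Real.log (1 - 2 * m r / r))
      (3/(16*π) * ((D * x - 3 * m x) / x ^ 4 * Real.log (1 - 2 * m x / x)
        - 2 * m x * (D * x - m x) / (x ^ 4 * (x - 2 * m x)))) x := by
  have hx3 : (x:ℝ)^3 ≠ 0 := pow_ne_zero _ hx
  have h1 : HasDerivAt (fun r => m r / r ^ 3)
      ((D * x ^ 3 - m x * (3 * x ^ 2)) / (x ^ 3) ^ 2) x := by
    simpa using hD.fun_div (hasDerivAt_pow 3 x) hx3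
  have h2 : HasDerivAt (fun r => 1 - 2 * m r / r) (-((2 * D * x - 2 * m x) / x ^ 2)) x := by
    have := ((hD.const_mul 2).fun_div (hasDerivAt_id x) hx)
    have h3 : HasDerivAt (fun r => 2 * m r / r) ((2 * D * x - 2 * m x) / x ^ 2) x := by
      simpa [mul_comm] using this
    simpa using (h3.const_sub 1)
  have hlogarg : 1 - 2 * m x / x ≠ 0 := by
    have : 1 - 2 * m x / x = (x - 2 * m x) / x := by field_simp
    rw [this]
    exact div_ne_zero hu hx
  have hlog : HasDerivAt (fun r => Real.log (1 - 2 * m r / r))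
      (-((2 * D * x - 2 * m x) / x ^ 2) / (1 - 2 * m x / x)) x := h2.log hlogarg
  have := ((h1.const_mul (3/(16*π))).fun_mul hlog)
  refine this.congr_deriv ?_
  field_simp
  ring

lemma tov_ae_deriv (R : ℝ) (hR : 0 < R) (m f : ℝ → ℝ)
    (hf0 : ∀ s ∈ Icc (0:ℝ) R, 0 ≤ f s)
    (hm : ∀ r ∈ Icc (0:ℝ) R, m r = ∫ s in (0:ℝ)..r, f s)
    (hmcont : ContinuousOn m (Icc 0 R))
    (hI : IntervalIntegrable f volume 0 R) :
    ∀ᵐ x ∂(volume : Measure ℝ), x ∈ Ioo (0:ℝ) R → HasDerivAt m (f x) x := by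
  have hsub : ∀ u v : ℝ, 0 ≤ u → u ≤ v → v ≤ R → IntervalIntegrable f volume u v := by
    intro u v h0 huv hvR
    refine hI.mono_set ?_
    rw [uIcc_of_le huv, uIcc_of_le hR.le]
    exact Icc_subset_Icc h0 hvR
  have hdiff : ∀ u v : ℝ, 0 ≤ u → u ≤ v → v ≤ R → m v - m u = ∫ s in u..v, f s := by
    intro u v h0 huv hvR
    rw [hm u ⟨h0, huv.trans hvR⟩, hm v ⟨h0.trans huv, hvR⟩,
      ← intervalIntegral.integral_add_adjacent_intervals
        (hsub 0 u le_rfl h0 (huv.trans hvR)) (hsub u v h0 huv hvR)]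
    ring
  have hmono : MonotoneOn m (Icc 0 R) := by
    intro u hu v hv huv
    have h1 := hdiff u v hu.1 huv hv.2
    have hnn : 0 ≤ ∫ s in u..v, f s :=
      intervalIntegral.integral_nonneg huv (fun s hs => hf0 s ⟨hu.1.trans hs.1, hs.2.trans hv.2⟩)
    linarith
  set cl : ℝ → ℝ := fun r => max 0 (min r R) with hcl
  have hclmem : ∀ r, cl r ∈ Icc (0:ℝ) R := fun r => ⟨le_max_left _ _, max_le hR.le (min_le_right _ _)⟩
  have hclid : ∀ r ∈ Icc (0:ℝ) R, cl r = r := by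
    intro r hr
    simp [hcl, min_eq_left hr.2, max_eq_right hr.1]
  have hclmono : Monotone cl := fun u v huv => max_le_max le_rfl (min_le_min huv le_rfl)
  have hclcont : Continuous cl := continuous_const.max (continuous_id.min continuous_const)
  set M : ℝ → ℝ := fun r => m (cl r) with hM
  have hMmono : Monotone M := fun u v huv => hmono (hclmem u) (hclmem v) (hclmono huv)
  have hMcont : Continuous M := hmcont.comp_continuous hclcont hclmem
  set sf : StieltjesFunction ℝ :=
    { toFun := M, mono' := hMmono,
      right_continuous' := fun x => (hMcont.continuousAt).continuousWithinAt } with hsf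
  set g : ℝ → ENNReal := fun s => ENNReal.ofReal ((Ioc (0:ℝ) R).indicator f s) with hg
  have hIoc : IntegrableOn f (Ioc 0 R) volume := by
    rw [intervalIntegrable_iff_integrableOn_Ioc_of_le hR.le] at hI; exact hI
  have hgaem : AEMeasurable g volume :=
    ENNReal.measurable_ofReal.comp_aemeasurable
      ((aemeasurable_indicator_iff measurableSet_Ioc).2 hIoc.aemeasurable)
  have hgind : ∀ s, g s = (Ioc (0:ℝ) R).indicator (fun t => ENNReal.ofReal (f t)) s := by
    intro s
    rw [hg]
    simp only [Set.indicator_apply]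
    split_ifs <;> simp
  have hmeq : sf.measure = volume.withDensity g := by
    refine Measure.ext_of_Ioc' _ _ (fun u v huv => ?_) (fun u v huv => ?_)
    · rw [sf.measure_Ioc]; exact ENNReal.ofReal_ne_top
    · rw [sf.measure_Ioc, withDensity_apply _ measurableSet_Ioc]
      have hre : ∫⁻ s in Ioc u v, g s = ∫⁻ s in Ioc (0 ⊔ u) (R ⊓ v), ENNReal.ofReal (f s) := by
        simp_rw [hgind]
        rw [lintegral_indicator measurableSet_Ioc _, Measure.restrict_restrict measurableSet_Ioc,
          Set.Ioc_inter_Ioc]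
      rw [hre]
      by_cases hcase : 0 ⊔ u ≤ R ⊓ v
      · have hu0 : (0:ℝ) ≤ 0 ⊔ u := le_sup_left
        have hvR : R ⊓ v ≤ R := inf_le_left
        have h1 : IntegrableOn f (Ioc (0 ⊔ u) (R ⊓ v)) volume := by
          have := hsub (0 ⊔ u) (R ⊓ v) hu0 hcase hvR
          rwa [intervalIntegrable_iff_integrableOn_Ioc_of_le hcase] at this
        have h2 : 0 ≤ᵐ[volume.restrict (Ioc (0 ⊔ u) (R ⊓ v))] f := by
          refine (ae_restrict_iff' measurableSet_Ioc).2 (ae_of_all _ fun s hs => ?_)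
          exact hf0 s ⟨hu0.trans hs.1.le, hs.2.trans hvR⟩
        rw [← ofReal_integral_eq_lintegral_ofReal h1 h2]
        congr 1
        have huR : u ≤ R := by
          by_contra hc
          push_neg at hc
          have : (0:ℝ) ⊔ u = u := sup_eq_right.2 (hR.le.trans hc.le)
          rw [this] at hcase
          have := hcase.trans hvR
          linarith
        have e1 : ∫ s in Ioc (0 ⊔ u) (R ⊓ v), f s = ∫ s in (0 ⊔ u)..(R ⊓ v), f s :=
          (intervalIntegral.integral_of_le hcase).symm
        rw [e1, ← hdiff _ _ hu0 hcase hvR]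
        have hclv : cl v = R ⊓ v := by
          have h0v : (0:ℝ) ≤ R ⊓ v := hu0.trans hcase
          simp [hcl, min_comm v R, max_eq_right h0v]
        have hclu : cl u = 0 ⊔ u := by
          simp [hcl, min_eq_left huR]
        show m (cl v) - m (cl u) = _
        rw [hclv, hclu]
      · push_neg at hcase
        rw [Set.Ioc_eq_empty (not_lt.2 hcase.le), Measure.restrict_empty, lintegral_zero_measure]
        have hle : cl v ≤ cl u := by
          rcases le_or_gt (min v R) 0 with h | h
          · have : cl v = 0 := by
              simp only [hcl]
              exact max_eq_left h
            rw [this]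
            exact le_max_left _ _
          · have hu0 : 0 < u := by
              by_contra hc
              push_neg at hc
              have : (0:ℝ) ⊔ u = 0 := sup_eq_left.2 hc
              rw [this] at hcase
              have : R ⊓ v < 0 := hcase
              rw [min_comm] at this
              linarith
            have h1 : (0:ℝ) ⊔ u = u := sup_eq_right.2 hu0.le
            rw [h1] at hcase
            have h2 : min v R ≤ min u R := by
              apply le_min _ (min_le_right _ _)
              have : R ⊓ v = min v R := by rw [min_comm]
              linarith [hcase, this ▸ hcase]
            exact max_le_max le_rfl h2
        have hMvu : M v ≤ M u := hmono (hclmem v) (hclmem u) hle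
        have hch : ENNReal.ofReal (sf v - sf u) = ENNReal.ofReal (M v - M u) := rfl
        rw [hch]
        exact ENNReal.ofReal_eq_zero.2 (sub_nonpos.2 hMvu)
  have hrn : sf.measure.rnDeriv volume =ᵐ[volume] g := by
    rw [hmeq]
    exact Measure.rnDeriv_withDensity₀ volume hgaem
  filter_upwards [sf.ae_hasDerivAt, hrn] with x hx hgx hxmem
  rw [hgx] at hx
  have hgx' : (g x).toReal = f x := by
    have hxI : x ∈ Ioc (0:ℝ) R := ⟨hxmem.1, hxmem.2.le⟩
    rw [hg]
    simp only [indicator_of_mem hxI]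
    exact ENNReal.toReal_ofReal (hf0 x ⟨hxmem.1.le, hxmem.2.le⟩)
  rw [hgx'] at hx
  have hev : m =ᶠ[nhds x] sf := by
    have hIcc : Icc (0:ℝ) R ∈ nhds x := Icc_mem_nhds hxmem.1 hxmem.2
    filter_upwards [hIcc] with t ht
    show m t = M t
    simp only [hM]
    rw [hclid t ht]
  exact hx.congr_of_eventuallyEq hev

/-- Relativistic pressure monotonicity: under the TOV inequality and a
nonincreasing average density, `p(r) - (3/(16π)) (m(r)/r³) ln(1-2m(r)/r)`
is nonincreasing on `(0,R]`. -/
theorem tov_pressure_monotone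
    (R : ℝ) (hR : 0 < R) (m ρ p : ℝ → ℝ)
    (hρ : ∀ s ∈ Icc (0:ℝ) R, 0 ≤ ρ s)
    (hppos : ∀ r ∈ Icc (0:ℝ) R, 0 ≤ p r)
    (hm : ∀ r ∈ Icc (0:ℝ) R, m r = ∫ s in (0:ℝ)..r, 4 * π * ρ s * s ^ 2)
    (hmdiff : DifferentiableOn ℝ m (Icc 0 R))
    (hcompact : ∀ r ∈ Ioc (0:ℝ) R, 2 * m r / r < 1)
    (havg : AntitoneOn (fun r => 3 * m r / (4 * π * r ^ 3)) (Ioc 0 R))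
    (hpdiff : ∀ r ∈ Ioc (0:ℝ) R, DifferentiableAt ℝ p r)
    (htov : ∀ r ∈ Ioc (0:ℝ) R,
      deriv p r ≤ -(ρ r * m r) / (r ^ 2 * (1 - 2 * m r / r))) :
    AntitoneOn
      (fun r => p r - (3 / (16 * π)) * (m r / r ^ 3) * Real.log (1 - 2 * m r / r))
      (Ioc 0 R) := by
  intro a ha b hb hab
  simp only
  have hIccsub : Icc a b ⊆ Ioc 0 R := fun t ht => ⟨lt_of_lt_of_le ha.1 ht.1, ht.2.trans hb.2⟩
  have hIccsub' : Icc a b ⊆ Icc 0 R := hIccsub.trans Ioc_subset_Icc_self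
  have hpc : ContinuousOn p (Icc a b) := fun t ht =>
    (hpdiff t (hIccsub ht)).continuousAt.continuousWithinAt
  by_cases hI : IntervalIntegrable (fun s => 4 * π * ρ s * s ^ 2) volume 0 R
  · -- integrable case
    have hf0 : ∀ s ∈ Icc (0:ℝ) R, 0 ≤ 4 * π * ρ s * s ^ 2 := fun s hs => by
      have := hρ s hs
      positivity
    have hE := tov_ae_deriv R hR m _ hf0 hm hmdiff.continuousOn hI
    have hmnn : ∀ x ∈ Icc (0:ℝ) R, 0 ≤ m x := fun x hx => by
      rw [hm x hx]
      exact intervalIntegral.integral_nonneg hx.1 (fun s hs => hf0 s ⟨hs.1, hs.2.trans hx.2⟩)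
    have hgap : ∀ x ∈ Ioc (0:ℝ) R, 0 < x - 2 * m x := fun x hx => by
      have h := hcompact x hx
      rw [div_lt_one hx.1] at h
      linarith
    have hD3 : ∀ x ∈ Ioo (0:ℝ) R, deriv m x * x - 3 * m x ≤ 0 := by
      intro x hx
      have hxI : x ∈ Ioc (0:ℝ) R := ⟨hx.1, hx.2.le⟩
      have hdm : HasDerivAt m (deriv m x) x :=
        (hmdiff.differentiableAt (Icc_mem_nhds hx.1 hx.2)).hasDerivAt
      have hden : HasDerivAt (fun r : ℝ => 4 * π * r ^ 3) (4*π*(3*x^2)) x := by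
        have h := (hasDerivAt_pow 3 x).const_mul (4*π)
        norm_num at h
        exact h
      have hV : HasDerivAt (fun r => 3 * m r / (4 * π * r ^ 3))
          ((3 * deriv m x * (4*π*x^3) - 3 * m x * (4*π*(3*x^2))) / (4*π*x^3)^2) x :=
        (hdm.const_mul 3).div hden (mul_pos (by positivity) (pow_pos hx.1 3)).ne'
      have hVle : (3 * deriv m x * (4*π*x^3) - 3 * m x * (4*π*(3*x^2))) / (4*π*x^3)^2 ≤ 0 := by
        have htend : Filter.Tendsto (slope (fun r => 3 * m r / (4 * π * r ^ 3)) x)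
            (nhdsWithin x (Ioi x))
            (nhds ((3 * deriv m x * (4*π*x^3) - 3 * m x * (4*π*(3*x^2))) / (4*π*x^3)^2)) := by
          refine (hasDerivAt_iff_tendsto_slope.mp hV).mono_left (nhdsWithin_mono x ?_)
          intro y hy
          simp only [Set.mem_compl_singleton_iff]
          exact ne_of_gt hy
        refine le_of_tendsto htend ?_
        filter_upwards [Ioo_mem_nhdsGT_of_mem ⟨le_refl x, hx.2⟩] with y hy
        rw [slope_def_field]
        refine div_nonpos_iff.mpr (Or.inr ⟨sub_nonpos.2 ?_, sub_nonneg.2 hy.1.le⟩)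
        exact havg hxI ⟨lt_trans hx.1 hy.1, hy.2.le⟩ hy.1.le
      have hpos : (0:ℝ) < (4*π*x^3)^2 := pow_pos (mul_pos (by positivity) (pow_pos hx.1 3)) 2
      have hnum : 3 * deriv m x * (4*π*x^3) - 3 * m x * (4*π*(3*x^2)) ≤ 0 := by
        have h := (div_le_iff₀ hpos).mp hVle
        linarith
      have h12 : (0:ℝ) < 12 * π * x^2 := mul_pos (by positivity) (pow_pos hx.1 2)
      nlinarith [hnum, h12]
    set ψ : ℝ → ℝ := fun x => m x / (4*π*x^3*(x - 2*m x)) with hψ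
    set φ : ℝ → ℝ := fun x => deriv m x * ψ x - 4*π*ρ x*x^2 * ψ x with hφ
    have hcont : ContinuousOn
        (fun r => p r - 3 / (16 * π) * (m r / r ^ 3) * Real.log (1 - 2 * m r / r))
        (Icc a b) := by
      have hmc : ContinuousOn m (Icc a b) := hmdiff.continuousOn.mono hIccsub'
      refine hpc.sub (ContinuousOn.mul (continuousOn_const.mul (hmc.div
        (continuousOn_pow 3) (fun t ht => pow_ne_zero _ (ne_of_gt (hIccsub ht).1)))) ?_)
      refine ContinuousOn.log ?_ ?_
      · exact continuousOn_const.sub (((continuousOn_const.mul hmc)).div continuousOn_id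
          (fun t ht => ne_of_gt (hIccsub ht).1))
      · intro t ht
        have : 0 < 1 - 2 * m t / t := sub_pos.2 (hcompact t (hIccsub ht))
        exact ne_of_gt this
    have hderiv : ∀ x ∈ Ioo a b, HasDerivWithinAt
        (fun r => p r - 3 / (16 * π) * (m r / r ^ 3) * Real.log (1 - 2 * m r / r))
        (deriv p x - 3/(16*π) * ((deriv m x * x - 3 * m x) / x ^ 4 * Real.log (1 - 2 * m x / x)
          - 2 * m x * (deriv m x * x - m x) / (x ^ 4 * (x - 2 * m x)))) (Ioi x) x := by
      intro x hx
      have hxO : x ∈ Ioo (0:ℝ) R := ⟨lt_trans ha.1 hx.1, lt_of_lt_of_le hx.2 hb.2⟩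
      have hxI : x ∈ Ioc (0:ℝ) R := ⟨hxO.1, hxO.2.le⟩
      have hdm : HasDerivAt m (deriv m x) x :=
        (hmdiff.differentiableAt (Icc_mem_nhds hxO.1 hxO.2)).hasDerivAt
      have hQ := aux_hasDerivAt_Q m x (deriv m x) (ne_of_gt hxO.1)
        (ne_of_gt (hgap x hxI)) hdm
      exact (((hpdiff x hxI).hasDerivAt).sub hQ).hasDerivWithinAt
    have hφg : ∀ x ∈ Ioo a b,
        deriv p x - 3/(16*π) * ((deriv m x * x - 3 * m x) / x ^ 4 * Real.log (1 - 2 * m x / x)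
          - 2 * m x * (deriv m x * x - m x) / (x ^ 4 * (x - 2 * m x))) ≤ φ x := by
      intro x hx
      have hxO : x ∈ Ioo (0:ℝ) R := ⟨lt_trans ha.1 hx.1, lt_of_lt_of_le hx.2 hb.2⟩
      have hxI : x ∈ Ioc (0:ℝ) R := ⟨hxO.1, hxO.2.le⟩
      have hxC : x ∈ Icc (0:ℝ) R := ⟨hxO.1.le, hxO.2.le⟩
      have hA : 0 ≤ m x := hmnn x hxC
      have hgapx : 0 < x - 2 * m x := hgap x hxI
      have hLle : Real.log (1 - 2 * m x / x) ≤ 0 := by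
        refine Real.log_nonpos ?_ ?_
        · have := sub_pos.2 (hcompact x hxI)
          linarith
        · have h0 : 0 ≤ 2 * m x / x := div_nonneg (by linarith) hxO.1.le
          linarith
      have k := key_ineq x (m x) (deriv m x) (Real.log (1 - 2 * m x / x)) hxO.1 hA hgapx
        (hD3 x hxO) hLle
      have htv := htov x hxI
      have heq : -(ρ x * m x)/(x^2*(1 - 2*m x/x)) = -(4*π*ρ x*x^2 * (m x/(4*π*x^3*(x-2*m x)))) := by
        have hx0 : x ≠ 0 := ne_of_gt hxO.1
        have hgne : x - 2*m x ≠ 0 := ne_of_gt hgapx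
        have hπ0 : π ≠ 0 := Real.pi_ne_zero
        have e1 : x^2*(1 - 2*m x/x) = x*(x - 2*m x) := by
          field_simp
        rw [e1]
        field_simp
      rw [heq] at htv
      simp only [hφ, hψ]
      linarith
    have hne : ∀ᵐ (x:ℝ) ∂(volume : Measure ℝ), x ≠ R := by
      rw [ae_iff]
      have hset : {x : ℝ | ¬ x ≠ R} = {R} := by ext t; simp
      rw [hset]
      exact Real.volume_singleton
    have hae : φ =ᵐ[volume.restrict (Icc a b)] (fun _ => (0:ℝ)) := by
      have h1 : ∀ᵐ x ∂volume.restrict (Icc a b), x ∈ Ioo (0:ℝ) R →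
          HasDerivAt m (4*π*ρ x*x^2) x := ae_restrict_of_ae hE
      have h2 : ∀ᵐ x ∂volume.restrict (Icc a b), x ∈ Icc a b :=
        ae_restrict_mem measurableSet_Icc
      have h3 : ∀ᵐ x ∂volume.restrict (Icc a b), x ≠ R := ae_restrict_of_ae hne
      filter_upwards [h1, h2, h3] with x hx1 hx2 hx3
      have hxO : x ∈ Ioo (0:ℝ) R :=
        ⟨lt_of_lt_of_le ha.1 hx2.1, lt_of_le_of_ne (hx2.2.trans hb.2) hx3⟩
      simp only [hφ]
      rw [(hx1 hxO).deriv]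
      ring
    have hint : IntegrableOn φ (Icc a b) volume :=
      (integrable_zero _ _ _).congr hae.symm
    have hzero : ∫ y in a..b, φ y = 0 := by
      rw [intervalIntegral.integral_of_le hab]
      have hae' : φ =ᵐ[volume.restrict (Ioc a b)] (fun _ => (0:ℝ)) :=
        ae_restrict_of_ae_restrict_of_subset Ioc_subset_Icc_self hae
      rw [integral_congr_ae hae', integral_zero]
    have key := intervalIntegral.sub_le_integral_of_hasDeriv_right_of_le hab hcont hderiv hint hφg
    rw [hzero] at key
    linarith
  · -- non-integrable case : m vanishes identically
    have hf0 : ∀ s ∈ Icc (0:ℝ) R, 0 ≤ 4 * π * ρ s * s ^ 2 := fun s hs => by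
      have := hρ s hs
      positivity
    set S : Set ℝ := {r | r ∈ Icc (0:ℝ) R ∧
      IntervalIntegrable (fun s => 4 * π * ρ s * s ^ 2) volume 0 r} with hS
    have hS0 : (0:ℝ) ∈ S := by
      refine ⟨⟨le_refl _, hR.le⟩, ?_⟩
      rw [intervalIntegrable_iff]
      simp
    have hbdd : BddAbove S := ⟨R, fun r hr => hr.1.2⟩
    have hSne : S.Nonempty := ⟨0, hS0⟩
    have hSd : ∀ r' ∈ S, ∀ r, 0 ≤ r → r ≤ r' → r ∈ S := by
      intro r' hr' r h0 hle
      refine ⟨⟨h0, hle.trans hr'.1.2⟩, hr'.2.mono_set ?_⟩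
      rw [uIcc_of_le h0, uIcc_of_le (h0.trans hle)]
      exact Icc_subset_Icc le_rfl hle
    have hmnn : ∀ r ∈ Icc (0:ℝ) R, 0 ≤ m r := fun r hr => by
      rw [hm r hr]
      exact intervalIntegral.integral_nonneg hr.1 (fun s hs => hf0 s ⟨hs.1, hs.2.trans hr.2⟩)
    have hmzero : ∀ r ∈ Icc (0:ℝ) R, r ∉ S → m r = 0 := by
      intro r hr hrS
      rw [hm r hr]
      exact intervalIntegral.integral_undef (fun h => hrS ⟨hr, h⟩)
    have hmono' : ∀ r ∈ S, ∀ r' ∈ S, r ≤ r' → m r ≤ m r' := by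
      intro r hr r' hr' hle
      have h1 : IntervalIntegrable (fun s => 4 * π * ρ s * s ^ 2) volume 0 r := hr.2
      have h2 : IntervalIntegrable (fun s => 4 * π * ρ s * s ^ 2) volume r r' := by
        refine hr'.2.mono_set ?_
        rw [uIcc_of_le hle, uIcc_of_le hr'.1.1]
        exact Icc_subset_Icc hr.1.1 le_rfl
      have hnn : 0 ≤ ∫ s in r..r', 4 * π * ρ s * s ^ 2 :=
        intervalIntegral.integral_nonneg hle
          (fun s hs => hf0 s ⟨hr.1.1.trans hs.1, hs.2.trans hr'.1.2⟩)
      rw [hm r hr.1, hm r' hr'.1, ← intervalIntegral.integral_add_adjacent_intervals h1 h2]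
      linarith
    set c' := sSup S with hc'
    have hc'le : c' ≤ R := csSup_le hSne (fun r hr => hr.1.2)
    have hc'0 : 0 ≤ c' := le_csSup hbdd hS0
    have hc'mem : c' ∈ Icc (0:ℝ) R := ⟨hc'0, hc'le⟩
    have hRnot : R ∉ S := fun h => hI h.2
    have hcont : ContinuousOn m (Icc 0 R) := hmdiff.continuousOn
    have hc0 : m c' = 0 := by
      by_cases hc'S : c' ∈ S
      · have hlt : c' < R := lt_of_le_of_ne hc'le (fun h => hRnot (h ▸ hc'S))
        have hev : ∀ t ∈ Ioc c' R, m t = 0 := by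
          intro t ht
          refine hmzero t ⟨hc'0.trans ht.1.le, ht.2⟩ (fun hts => ?_)
          exact absurd (le_csSup hbdd hts) (not_le.2 ht.1)
        have hsubIoc : Ioc c' R ⊆ Icc 0 R := fun t ht => ⟨hc'0.trans ht.1.le, ht.2⟩
        have htend : Filter.Tendsto m (nhdsWithin c' (Ioc c' R)) (nhds (m c')) :=
          ((hcont c' hc'mem).mono hsubIoc)
        have htend0 : Filter.Tendsto m (nhdsWithin c' (Ioc c' R)) (nhds 0) := by
          refine Filter.Tendsto.congr' ?_ tendsto_const_nhds
          filter_upwards [self_mem_nhdsWithin] with t ht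
          exact (hev t ht).symm
        have hcl : c' ∈ closure (Ioc c' R) := by
          rw [closure_Ioc hlt.ne]
          exact ⟨le_refl _, hlt.le⟩
        haveI hnb := mem_closure_iff_nhdsWithin_neBot.1 hcl
        exact tendsto_nhds_unique htend htend0
      · exact hmzero c' hc'mem hc'S
    have hm0 : ∀ r ∈ Icc (0:ℝ) R, m r = 0 := by
      intro r hr
      by_cases hrS : r ∈ S
      · refine le_antisymm ?_ (hmnn r hr)
        by_cases hc'S : c' ∈ S
        · have := hmono' r hrS c' hc'S (le_csSup hbdd hrS)
          linarith [hc0]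
        · have hrlt : r < c' := lt_of_le_of_ne (le_csSup hbdd hrS) (fun h => hc'S (h ▸ hrS))
          refine le_of_forall_pos_le_add ?_
          intro ε hε
          have hcw : ContinuousWithinAt m (Icc 0 R) c' := hcont c' hc'mem
          rw [Metric.continuousWithinAt_iff] at hcw
          obtain ⟨δ, hδ, hball⟩ := hcw ε hε
          obtain ⟨t, htS, htlt⟩ := exists_lt_of_lt_csSup hSne
            (show max r (c' - δ/2) < c' by
              rw [max_lt_iff]
              constructor
              · exact hrlt
              · linarith)
          have htle : t ≤ c' := le_csSup hbdd htS
          have hdist : dist t c' < δ := by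
            rw [Real.dist_eq, abs_lt]
            constructor
            · have := lt_of_le_of_lt (le_max_right r (c' - δ/2)) htlt
              linarith [max_lt_iff.1 htlt]
            · linarith
          have hmt : |m t - m c'| < ε := by
            have := hball htS.1 hdist
            rwa [Real.dist_eq] at this
          have h1 : m r ≤ m t := hmono' r hrS t htS (le_of_lt (lt_of_le_of_lt (le_max_left _ _) htlt))
          rw [hc0] at hmt
          rw [sub_zero] at hmt
          have := abs_lt.1 hmt
          linarith [this.2]
      · exact hmzero r hr hrS
    have hpderiv : ∀ x ∈ Ioo a b, HasDerivWithinAt p (deriv p x) (Ioi x) x := by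
      intro x hx
      have hxI : x ∈ Ioc (0:ℝ) R := ⟨lt_trans ha.1 hx.1, (lt_of_lt_of_le hx.2 hb.2).le⟩
      exact ((hpdiff x hxI).hasDerivAt).hasDerivWithinAt
    have hple : ∀ x ∈ Ioo a b, deriv p x ≤ (fun _ => (0:ℝ)) x := by
      intro x hx
      have hxI : x ∈ Ioc (0:ℝ) R := ⟨lt_trans ha.1 hx.1, (lt_of_lt_of_le hx.2 hb.2).le⟩
      have := htov x hxI
      rw [hm0 x (Ioc_subset_Icc_self hxI)] at this
      simpa using this
    have hint0 : IntegrableOn (fun _ => (0:ℝ)) (Icc a b) volume := by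
      simpa using (integrable_zero ℝ ℝ (volume.restrict (Icc a b)))
    have key := intervalIntegral.sub_le_integral_of_hasDeriv_right_of_le hab hpc hpderiv
      hint0 hple
    simp only [intervalIntegral.integral_zero] at key
    have hma : m a = 0 := hm0 a (Ioc_subset_Icc_self ha)
    have hmb : m b = 0 := hm0 b (Ioc_subset_Icc_self hb)
    rw [hma, hmb]
    simp only [zero_div, mul_zero, zero_mul, Real.log_one, sub_zero]
    norm_num
    linarith
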